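/- (Pruning/commitment lemma) Let σ be a partial layout of F ⊆ E of width at most k, and suppose there exists e ∈ E \ F with d(F ∪ {e}) ≤ d(F). Then σ is k-extendable if and only if the partial layout σ' of F ∪ {e} obtained by appending e at the end of σ is k-extendable. -/

import Mathlib

variable {V : Type*} [Fintype V] [DecidableEq V]

/-- `Vs F` is the set of endpoints of edges in `F`. -/
def Vs (F : Finset (Sym2 V)) : Finset V :=
  Finset.univ.filter (fun v => ∃ e ∈ F, v ∈ e)

/-- The set of endpoints of a single edge. -/
def eset (e : Sym2 V) : Finset V := Finset.univ.filter (fun v => v ∈ e)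

/-- `mids E F` is mid(F) = V(F) ∩ V(E \ F), relative to the edge set `E`. -/
def mids (E F : Finset (Sym2 V)) : Finset V := Vs F ∩ Vs (E \ F)

/-- `dd E F` is d(F) = |mid(F)|, relative to the edge set `E`. -/
def dd (E F : Finset (Sym2 V)) : ℕ := (mids E F).card

/-- A layout of the edge set `E`: a duplicate-free list enumerating `E`
(equivalently, a bijection {1,…,m} → E). -/
def IsLayout (E : Finset (Sym2 V)) (L : List (Sym2 V)) : Prop :=
  L.Nodup ∧ L.toFinset = E

/-- The (partial) layout `L` has width at most `k` w.r.t. the edge set `E`: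
every prefix `π_{≤ i}` satisfies d(π_{≤ i}) ≤ k. -/
def WidthLE (E : Finset (Sym2 V)) (L : List (Sym2 V)) (k : ℕ) : Prop :=
  ∀ i, dd E (L.take i).toFinset ≤ k

/-- The linearwidth of the edge set `E`: the minimum width of a layout of `E`. -/
noncomputable def lw (E : Finset (Sym2 V)) : ℕ :=
  sInf {k | ∃ L, IsLayout E L ∧ WidthLE E L k}

/-- The number of edges of `S` incident to `u`. -/
def degIn (S : Finset (Sym2 V)) (u : V) : ℕ := (S.filter (fun e => u ∈ e)).card

/-- `X` is a path decomposition of `G`, given as a list of bags. -/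
def IsPD (G : SimpleGraph V) (X : List (Finset V)) : Prop :=
  (∀ v : V, ∃ B ∈ X, v ∈ B) ∧
  (∀ e ∈ G.edgeSet, ∃ B ∈ X, eset e ⊆ B) ∧
  (∀ v : V, ∀ i j l : ℕ, i ≤ j → j ≤ l → l < X.length →
    v ∈ X.getD i ∅ → v ∈ X.getD l ∅ → v ∈ X.getD j ∅)

/-- The pathwidth of `G`: the minimum over path decompositions of (max bag size) − 1. -/
noncomputable def pw (G : SimpleGraph V) : ℕ :=
  sInf {k | ∃ X, IsPD G X ∧ ∀ B ∈ X, B.card ≤ k + 1}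

/-- The closure F* of `F` in `E`: all edges of `E` with both endpoints in `V(F)`. -/
def cl (E F : Finset (Sym2 V)) : Finset (Sym2 V) := E.filter (fun e => eset e ⊆ Vs F)

/-- A partial layout `S` is `k`-extendable: it is a prefix of some layout
of `E` of width at most `k`. -/
def Extendable (E : Finset (Sym2 V)) (k : ℕ) (S : List (Sym2 V)) : Prop :=
  ∃ L, IsLayout E L ∧ WidthLE E L k ∧ S <+: L


lemma mem_Vs' {F : Finset (Sym2 V)} {v : V} : v ∈ Vs F ↔ ∃ e ∈ F, v ∈ e := by
  simp [Vs]

lemma mem_mids' {E F : Finset (Sym2 V)} {v : V} :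
    v ∈ mids E F ↔ (∃ f ∈ F, v ∈ f) ∧ (∃ f, f ∈ E ∧ f ∉ F ∧ v ∈ f) := by
  simp only [mids, Finset.mem_inter, mem_Vs', Finset.mem_sdiff]
  constructor
  · rintro ⟨h1, f, ⟨hfE, hfF⟩, hvf⟩
    exact ⟨h1, f, hfE, hfF, hvf⟩
  · rintro ⟨h1, f, hfE, hfF, hvf⟩
    exact ⟨h1, f, ⟨hfE, hfF⟩, hvf⟩

lemma card_sdiff_le_iff' {A B : Finset V} : A.card ≤ B.card ↔ (A \ B).card ≤ (B \ A).card := by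
  have hA := Finset.card_sdiff_add_card_inter A B
  have hB := Finset.card_sdiff_add_card_inter B A
  rw [Finset.inter_comm] at hB
  omega

lemma key_dd (E : Finset (Sym2 V)) (e : Sym2 V) (F P : Finset (Sym2 V)) (heE : e ∈ E)
    (hFP : F ⊆ P) (heP : e ∉ P) (hd : dd E (insert e F) ≤ dd E F) :
    dd E (insert e P) ≤ dd E P := by
  rw [dd, dd, card_sdiff_le_iff']
  rw [dd, dd, card_sdiff_le_iff'] at hd
  have h1 : mids E (insert e P) \ mids E P ⊆ mids E (insert e F) \ mids E F := by
    intro v hv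
    rw [Finset.mem_sdiff, mem_mids', mem_mids'] at hv ⊢
    obtain ⟨⟨⟨f, hf, hvf⟩, ⟨g, hgE, hgP, hvg⟩⟩, hnot⟩ := hv
    have hgnP : g ∉ P := fun h => hgP (Finset.mem_insert_of_mem h)
    have hgne : g ≠ e := fun h => hgP (h ▸ Finset.mem_insert_self e P)
    have hvP : ¬ ∃ f ∈ P, v ∈ f := by
      intro hx
      exact hnot ⟨hx, ⟨g, hgE, hgnP, hvg⟩⟩
    have hfe : f = e := by
      rcases Finset.mem_insert.mp hf with h | h
      · exact h
      · exact absurd ⟨f, h, hvf⟩ hvP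
    refine ⟨⟨⟨e, Finset.mem_insert_self e F, hfe ▸ hvf⟩, ⟨g, hgE, ?_, hvg⟩⟩, ?_⟩
    · intro hg
      rcases Finset.mem_insert.mp hg with h | h
      · exact hgne h
      · exact hgnP (hFP h)
    · rintro ⟨⟨f', hf', hvf'⟩, -⟩
      exact hvP ⟨f', hFP hf', hvf'⟩
  have h2 : mids E F \ mids E (insert e F) ⊆ mids E P \ mids E (insert e P) := by
    intro v hv
    rw [Finset.mem_sdiff, mem_mids', mem_mids'] at hv ⊢
    obtain ⟨⟨⟨f, hf, hvf⟩, ⟨g, hgE, hgF, hvg⟩⟩, hnot⟩ := hv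
    have hnoOut : ¬ ∃ h, h ∈ E ∧ h ∉ insert e F ∧ v ∈ h := by
      rintro ⟨h, hhE, hhF, hvh⟩
      exact hnot ⟨⟨f, Finset.mem_insert_of_mem hf, hvf⟩, ⟨h, hhE, hhF, hvh⟩⟩
    have hge : g = e := by
      by_contra hne
      exact hnoOut ⟨g, hgE, fun h => (Finset.mem_insert.mp h).elim hne hgF, hvg⟩
    refine ⟨⟨⟨f, hFP hf, hvf⟩, ⟨e, heE, heP, hge ▸ hvg⟩⟩, ?_⟩
    rintro ⟨-, ⟨h, hhE, hhP, hvh⟩⟩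
    apply hnoOut
    refine ⟨h, hhE, ?_, hvh⟩
    intro hmem
    rcases Finset.mem_insert.mp hmem with h1 | h1
    · exact hhP (h1 ▸ Finset.mem_insert_self e P)
    · exact hhP (Finset.mem_insert_of_mem (hFP h1))
  calc (mids E (insert e P) \ mids E P).card
      ≤ (mids E (insert e F) \ mids E F).card := Finset.card_le_card h1
    _ ≤ (mids E F \ mids E (insert e F)).card := hd
    _ ≤ (mids E P \ mids E (insert e P)).card := Finset.card_le_card h2


lemma perm_aux {α : Type*} (S T₁ X : List α) (e : α) :
    List.Perm ((S ++ [e]) ++ (T₁ ++ X)) (S ++ (T₁ ++ e :: X)) := by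
  rw [List.append_assoc]
  exact List.Perm.append_left S (List.perm_middle (a := e) (l₁ := T₁) (l₂ := X)).symm

lemma toFinset_aux1 (S X : List (Sym2 V)) (e : Sym2 V) :
    ((S ++ [e]) ++ X).toFinset = insert e (S ++ X).toFinset := by
  ext x
  simp only [List.toFinset_append, List.toFinset_cons, List.toFinset_nil,
    Finset.mem_union, Finset.mem_insert, List.mem_toFinset,
    insert_empty_eq, Finset.mem_singleton]
  tauto

set_option maxHeartbeats 1000000 in
/-- Pruning lemma: if σ is a width-≤-k partial layout of F and e ∈ E \ F satisfies
d(F ∪ {e}) ≤ d(F), then σ is k-extendable iff σ with e appended is k-extendable. -/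
theorem stmt12 (E F : Finset (Sym2 V)) (hFE : F ⊆ E) (k : ℕ)
    (S : List (Sym2 V)) (hnd : S.Nodup) (hSF : S.toFinset = F)
    (hw : WidthLE E S k) (e : Sym2 V) (he : e ∈ E \ F)
    (hd : dd E (insert e F) ≤ dd E F) :
    Extendable E k S ↔ Extendable E k (S ++ [e]) := by
  obtain ⟨heE, heF⟩ := Finset.mem_sdiff.mp he
  constructor
  · rintro ⟨L, ⟨hLnd, hLF⟩, hwL, T, rfl⟩
    have heS : e ∉ S := fun h => heF (hSF ▸ List.mem_toFinset.mpr h)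
    have heT : e ∈ T := by
      have h1 : e ∈ (S ++ T).toFinset := by rw [hLF]; exact heE
      simp only [List.toFinset_append, Finset.mem_union, List.mem_toFinset] at h1
      exact h1.resolve_left heS
    obtain ⟨T₁, T₂, rfl⟩ := List.append_of_mem heT
    have heT₁ : e ∉ T₁ := by
      have h := List.nodup_append'.mp (List.nodup_append'.mp hLnd).2.1
      exact fun hmem => (h.2.2 hmem) (List.mem_cons_self (a := e) (l := T₂))
    have hlen : (S ++ [e]).length = S.length + 1 := by simp
    have hperm := perm_aux S T₁ T₂ e
    refine ⟨(S ++ [e]) ++ (T₁ ++ T₂),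
      ⟨hperm.nodup_iff.mpr hLnd, by rw [List.toFinset_eq_of_perm _ _ hperm, hLF]⟩,
      ?_, T₁ ++ T₂, rfl⟩
    intro i
    rcases le_or_gt i S.length with hi | hi
    · have h1 : ((S ++ [e]) ++ (T₁ ++ T₂)).take i = S.take i := by
        rw [List.take_append_of_le_length (show i ≤ (S ++ [e]).length by
              rw [hlen]; omega),
          List.take_append_of_le_length hi]
      have h2 : (S ++ (T₁ ++ e :: T₂)).take i = S.take i :=
        List.take_append_of_le_length hi
      rw [h1]
      have hk := hwL i
      rwa [h2] at hk
    · rcases le_or_gt i (S.length + 1 + T₁.length) with hi2 | hi2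
      · -- middle case: prefix is S ++ [e] ++ T₁.take (i - (S.length+1))
        have h1 : ((S ++ [e]) ++ (T₁ ++ T₂)).take i
            = (S ++ [e]) ++ T₁.take (i - (S.length + 1)) := by
          rw [List.take_append,
            List.take_of_length_le (show (S ++ [e]).length ≤ i by rw [hlen]; omega),
            hlen, List.take_append,
            show i - (S.length + 1) - T₁.length = 0 from by omega,
            List.take_zero, List.append_nil]
        have h2 : (S ++ (T₁ ++ e :: T₂)).take (i - 1)
            = S ++ T₁.take (i - (S.length + 1)) := by
          rw [List.take_append,
            List.take_of_length_le (show S.length ≤ i - 1 by omega),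
            List.take_append,
            show i - 1 - S.length - T₁.length = 0 from by omega,
            List.take_zero, List.append_nil,
            show i - 1 - S.length = i - (S.length + 1) from by omega]
        have h3 := toFinset_aux1 S (T₁.take (i - (S.length + 1))) e
        rw [h1, h3]
        have hFsub : F ⊆ (S ++ T₁.take (i - (S.length + 1))).toFinset := by
          rw [← hSF]
          intro x hx
          simp only [List.toFinset_append, Finset.mem_union]
          exact Or.inl hx
        have heP : e ∉ (S ++ T₁.take (i - (S.length + 1))).toFinset := by
          simp only [List.toFinset_append, Finset.mem_union, List.mem_toFinset]
          rintro (h | h)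
          · exact heS h
          · exact heT₁ (List.take_subset _ T₁ h)
        refine le_trans (key_dd E e F _ heE hFsub heP hd) ?_
        have hk := hwL (i - 1)
        rwa [h2] at hk
      · -- final case: prefix sets coincide with those of L
        have h1 : ((S ++ [e]) ++ (T₁ ++ T₂)).take i
            = (S ++ [e]) ++ (T₁ ++ T₂.take (i - (S.length + 1) - T₁.length)) := by
          rw [List.take_append,
            List.take_of_length_le (show (S ++ [e]).length ≤ i by rw [hlen]; omega),
            hlen, List.take_append,
            List.take_of_length_le (show T₁.length ≤ i - (S.length + 1) by omega)]
        have h2 : (S ++ (T₁ ++ e :: T₂)).take i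
            = S ++ (T₁ ++ e :: T₂.take (i - (S.length + 1) - T₁.length)) := by
          rw [List.take_append,
            List.take_of_length_le (show S.length ≤ i by omega),
            List.take_append,
            List.take_of_length_le (show T₁.length ≤ i - S.length by omega),
            show i - S.length - T₁.length
              = (i - (S.length + 1) - T₁.length) + 1 from by omega,
            List.take_succ_cons]
        have h3 := List.toFinset_eq_of_perm _ _
          (perm_aux S T₁ (T₂.take (i - (S.length + 1) - T₁.length)) e)
        rw [h1, h3, ← h2]
        exact hwL i
  · rintro ⟨L, hL, hwL, hpre⟩
    exact ⟨L, hL, hwL, ((List.prefix_append S [e]).trans hpre)⟩
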